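/- For every natural number s ≥ 1, the vector a with entries a_j = (1/s!)·C(s,j)·C(s+j,j), j = 0,...,s, solves the linear system M·a = l, where M is the (s+1)×(s+1) matrix with entries M(i,j) = (-1)^j·((i+j)!/i!)·((2s+1)!/(s+j+1)!) and l is the vector with entries l_i = (-1)^i·C(s,i). -/

import Mathlib

open Finset

lemma pascal_sum (n : ℕ) (F : ℕ → ℚ) :
    ∑ k ∈ range (n+2), (-1:ℚ)^k * ((n+1).choose k) * F k
      = ∑ k ∈ range (n+1), (-1:ℚ)^k * (n.choose k) * F k
        - ∑ k ∈ range (n+1), (-1:ℚ)^k * (n.choose k) * F (k+1) := by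
  have h1 : ∑ k ∈ range (n+2), (-1:ℚ)^k * (n.choose k) * F k
      = ∑ k ∈ range (n+1), (-1:ℚ)^k * (n.choose k) * F k := by
    rw [Finset.sum_range_succ]
    simp
  rw [← h1, Finset.sum_range_succ' (fun k => (-1:ℚ)^k * ((n+1).choose k) * F k),
    Finset.sum_range_succ' (fun k => (-1:ℚ)^k * (n.choose k) * F k)]
  simp only [Nat.choose_succ_succ, Nat.cast_add, Nat.choose_zero_right, Nat.cast_one, pow_zero]
  have h2 : ∑ x ∈ range (n+1), (-1:ℚ)^(x+1) * ((n.choose x : ℚ) + (n.choose (x+1) : ℚ)) * F (x+1)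
      = ∑ x ∈ range (n+1), ((-1:ℚ)^(x+1) * (n.choose (x+1) : ℚ) * F (x+1)
          - (-1:ℚ)^x * (n.choose x : ℚ) * F (x+1)) :=
    Finset.sum_congr rfl (fun x _ => by ring)
  rw [h2, Finset.sum_sub_distrib]
  ring

lemma lemA : ∀ (n m : ℕ), ∑ k ∈ range (n+1), (-1:ℚ)^k * (n.choose k) / (m+k+1)
    = (n.factorial * m.factorial : ℚ) / (m+n+1).factorial := by
  intro n
  induction n with
  | zero =>
    intro m
    rw [Finset.sum_range_one]
    have h : ((m+0+1).factorial : ℚ) = ((m:ℚ)+1) * m.factorial := by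
      norm_num [Nat.factorial_succ]
    rw [h]
    have hm : ((m:ℚ)+1) ≠ 0 := by positivity
    have hf : (m.factorial : ℚ) ≠ 0 := Nat.cast_ne_zero.mpr (Nat.factorial_ne_zero _)
    field_simp
    simp
  | succ n ih =>
    intro m
    have key := pascal_sum n (fun k => 1 / ((m:ℚ)+k+1))
    push_cast at key
    have e1 : ∑ k ∈ range (n+2), (-1:ℚ)^k * ((n+1).choose k) / (m+k+1)
        = ∑ k ∈ range (n+2), (-1:ℚ)^k * ((n+1).choose k) * (1 / ((m:ℚ)+k+1)) := by
      apply Finset.sum_congr rfl; intro k _; ring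
    have e2 : ∑ k ∈ range (n+1), (-1:ℚ)^k * (n.choose k) * (1 / ((m:ℚ)+k+1))
        = ∑ k ∈ range (n+1), (-1:ℚ)^k * (n.choose k) / (m+k+1) := by
      apply Finset.sum_congr rfl; intro k _; ring
    have e3 : ∑ k ∈ range (n+1), (-1:ℚ)^k * (n.choose k) * (1 / ((m:ℚ)+(k+1)+1))
        = ∑ k ∈ range (n+1), (-1:ℚ)^k * (n.choose k) / ((m+1:ℕ)+k+1) := by
      apply Finset.sum_congr rfl; intro k _; push_cast; ring_nf
    rw [show ((n:ℕ)+1+1) = n+2 from rfl, e1, key, e2, e3, ih m, ih (m+1)]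
    have h1 : ((m+(n+1)+1).factorial : ℚ) = ((m:ℚ)+n+2) * (m+n+1).factorial := by
      have : m+(n+1)+1 = (m+n+1)+1 := by ring
      rw [this, Nat.factorial_succ]; push_cast; ring
    have h2 : ((m+1+n+1).factorial : ℚ) = ((m:ℚ)+n+2) * (m+n+1).factorial := by
      have : m+1+n+1 = (m+n+1)+1 := by ring
      rw [this, Nat.factorial_succ]; push_cast; ring
    have h3 : (((m+1)).factorial : ℚ) = ((m:ℚ)+1) * m.factorial := by
      rw [Nat.factorial_succ]; push_cast; ring
    rw [h1, h2, h3]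
    have hf1 : ((m+n+1).factorial : ℚ) ≠ 0 := Nat.cast_ne_zero.mpr (Nat.factorial_ne_zero _)
    have hf2 : ((m:ℚ)+n+2) ≠ 0 := by positivity
    field_simp
    push_cast [Nat.factorial_succ]
    ring
lemma lemK (r : ℕ) : ∀ (n m : ℕ), ∑ t ∈ range (n+1), (-1:ℚ)^t * (n.choose t) * ((m+t).choose r)
    = if n ≤ r then (-1:ℚ)^n * ((m.choose (r-n)):ℚ) else 0 := by
  intro n
  induction n with
  | zero =>
    intro m
    simp
  | succ n ih =>
    intro m
    have key := pascal_sum n (fun t => (((m+t).choose r : ℕ) : ℚ))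
    beta_reduce at key
    have e3 : ∑ k ∈ range (n+1), (-1:ℚ)^k * (n.choose k) * (((m+(k+1)).choose r : ℕ):ℚ)
        = ∑ k ∈ range (n+1), (-1:ℚ)^k * (n.choose k) * ((((m+1)+k).choose r : ℕ):ℚ) := by
      apply Finset.sum_congr rfl; intro k _
      rw [show m + (k+1) = (m+1)+k by omega]
    rw [e3] at key
    rw [show ((n:ℕ)+1+1) = n+2 from rfl, key, ih m, ih (m+1)]
    by_cases h1 : n + 1 ≤ r
    · have h2 : n ≤ r := by omega
      rw [if_pos h2, if_pos h2, if_pos h1]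
      have hd : r - n = (r - (n+1)) + 1 := by omega
      rw [hd, Nat.choose_succ_succ (m) ((r - (n+1)))]
      push_cast
      ring
    · by_cases h2 : n ≤ r
      · have hr : r = n := by omega
        rw [if_pos h2, if_pos h2, if_neg h1]
        subst hr
        simp
      · rw [if_neg h2, if_neg h2, if_neg h1]
        simp

lemma lemT (s m t : ℕ) (ht : t ≤ s) :
    ∑ j ∈ range (s+1), (-1:ℚ)^j * (s.choose j) * (j.choose t) / (m+j+1)
      = (-1:ℚ)^t * (s.choose t) * ((s-t).factorial * (m+t).factorial) / ((m+s+1).factorial) := by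
  have h0 : ∑ j ∈ range (s+1), (-1:ℚ)^j * (s.choose j) * (j.choose t) / (m+j+1)
      = ∑ j ∈ Ico t (s+1), (-1:ℚ)^j * (s.choose j) * (j.choose t) / (m+j+1) := by
    rw [Finset.range_eq_Ico]
    apply (Finset.sum_subset (Finset.Ico_subset_Ico (Nat.zero_le _) le_rfl) _).symm
    intro x hx hnx
    simp only [Finset.mem_Ico] at hx hnx
    have hxt : x < t := by omega
    simp [Nat.choose_eq_zero_of_lt hxt]
  rw [h0, Finset.sum_Ico_eq_sum_range, show s+1-t = (s-t)+1 by omega]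
  have hcong : ∀ u ∈ range ((s-t)+1),
      (-1:ℚ)^(t+u) * (s.choose (t+u)) * ((t+u).choose t) / ((m:ℚ)+((t+u:ℕ):ℚ)+1)
        = ((-1:ℚ)^t * (s.choose t)) * ((-1:ℚ)^u * (((s-t).choose u)) / (((m+t):ℕ)+u+1)) := by
    intro u hu
    have hu' : u ≤ s - t := Nat.lt_succ_iff.mp (mem_range.mp hu)
    have hc := Nat.choose_mul (n := s) (k := t+u) (show t ≤ t+u by omega)
    rw [Nat.add_sub_cancel_left] at hc
    have hc' : ((s.choose (t+u) : ℚ)) * ((t+u).choose t) = (s.choose t : ℚ) * ((s-t).choose u) := by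
      exact_mod_cast congrArg (Nat.cast : ℕ → ℚ) hc
    push_cast
    linear_combination ((-1:ℚ)^(t+u) / ((m:ℚ) + t + u + 1)) * hc'
  rw [Finset.sum_congr rfl hcong, ← Finset.mul_sum, lemA (s-t) (m+t),
    show (m+t)+(s-t)+1 = m+s+1 by omega]
  push_cast
  ring

lemma vdm (s j : ℕ) (hj : j ≤ s) :
    (s+j).choose j = ∑ t ∈ range (s+1), s.choose t * j.choose t := by
  have h1 : (s+j).choose j = ∑ t ∈ range (j+1), s.choose t * j.choose t := by
    rw [Nat.add_choose_eq, Finset.Nat.sum_antidiagonal_eq_sum_range_succ_mk]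
    apply Finset.sum_congr rfl
    intro t ht
    rw [Nat.choose_symm (Nat.lt_succ_iff.mp (mem_range.mp ht))]
  rw [h1]
  apply Finset.sum_subset (Finset.range_subset_range.mpr (by omega))
  intro x hx hnx
  have hjx : j < x := by
    simp only [Finset.mem_range] at hx hnx; omega
  simp [Nat.choose_eq_zero_of_lt hjx]

lemma lemInner (s m : ℕ) (hm : m ≤ s) :
    ∑ j ∈ range (s+1), (-1:ℚ)^j * (s.choose j) * ((s+j).choose j) / (m+j+1)
      = if m = s then (-1:ℚ)^s * ((s.factorial : ℚ) * s.factorial) / ((2*s+1).factorial) else 0 := by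
  have step1 : ∀ j ∈ range (s+1), (-1:ℚ)^j * (s.choose j) * ((s+j).choose j) / (m+j+1)
      = ∑ t ∈ range (s+1), (s.choose t : ℚ) *
          ((-1:ℚ)^j * (s.choose j) * (j.choose t) / (m+j+1)) := by
    intro j hj
    have hj' : j ≤ s := Nat.lt_succ_iff.mp (mem_range.mp hj)
    have hv : (((s+j).choose j : ℕ) : ℚ) = ∑ t ∈ range (s+1), (s.choose t : ℚ) * (j.choose t) := by
      rw [vdm s j hj']
      push_cast
      rfl
    rw [hv, Finset.mul_sum, Finset.sum_div]
    apply Finset.sum_congr rfl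
    intro t _
    ring
  rw [Finset.sum_congr rfl step1, Finset.sum_comm]
  have step2 : ∀ t ∈ range (s+1),
      ∑ j ∈ range (s+1), (s.choose t : ℚ) * ((-1:ℚ)^j * (s.choose j) * (j.choose t) / (m+j+1))
        = ((s.factorial : ℚ) * m.factorial / (m+s+1).factorial) *
            ((-1:ℚ)^t * (s.choose t) * ((m+t).choose m)) := by
    intro t ht
    have ht' : t ≤ s := Nat.lt_succ_iff.mp (mem_range.mp ht)
    rw [← Finset.mul_sum, lemT s m t ht']
    have htf : (t.factorial : ℚ) ≠ 0 := Nat.cast_ne_zero.mpr (Nat.factorial_ne_zero _)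
    have hmsf : ((m+s+1).factorial : ℚ) ≠ 0 := Nat.cast_ne_zero.mpr (Nat.factorial_ne_zero _)
    have f1 : ((s.choose t : ℚ)) * t.factorial * (s-t).factorial = s.factorial := by
      exact_mod_cast congrArg (Nat.cast : ℕ → ℚ) (Nat.choose_mul_factorial_mul_factorial ht')
    have f2 : (((m+t).choose m : ℚ)) * m.factorial * t.factorial = (m+t).factorial := by
      rw [show (m+t).choose m = (m+t).choose t from Nat.choose_symm_add]
      exact_mod_cast congrArg (Nat.cast : ℕ → ℚ) (Nat.add_choose_mul_factorial_mul_factorial m t)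
    have hC : ((s.choose t : ℕ) : ℚ) ≠ 0 :=
      Nat.cast_ne_zero.mpr (Nat.choose_pos ht').ne'
    have hmf : ((m.factorial : ℕ) : ℚ) ≠ 0 := Nat.cast_ne_zero.mpr (Nat.factorial_ne_zero _)
    have g1 : ((s-t).factorial : ℚ) = (s.factorial : ℚ) / ((s.choose t : ℚ) * t.factorial) := by
      rw [eq_div_iff (mul_ne_zero hC htf)]
      linear_combination f1
    have g2 : (((m+t).choose m : ℕ) : ℚ) = ((m+t).factorial : ℚ) / ((m.factorial : ℚ) * t.factorial) := by
      rw [eq_div_iff (mul_ne_zero hmf htf)]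
      linear_combination f2
    rw [g1, g2]
    field_simp
  rw [Finset.sum_congr rfl step2, ← Finset.mul_sum, lemK m s m]
  by_cases hms : m = s
  · subst hms
    rw [if_pos rfl, if_pos le_rfl, Nat.sub_self, Nat.choose_zero_right,
      show m+m+1 = 2*m+1 by ring]
    push_cast
    ring
  · rw [if_neg hms, if_neg (by omega)]
    ring

theorem linear_system_solution (s : ℕ) (hs : 1 ≤ s) (i : ℕ) (hi : i ≤ s) :
    ∑ j ∈ Finset.range (s + 1),
        (-1 : ℚ) ^ j * (((i + j).factorial : ℚ) / (i.factorial : ℚ)) *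
          (((2 * s + 1).factorial : ℚ) / ((s + j + 1).factorial : ℚ)) *
          ((1 / (s.factorial : ℚ)) * (s.choose j) * ((s + j).choose j)) =
      (-1 : ℚ) ^ i * (s.choose i) := by
  have hif : ((i.factorial : ℕ) : ℚ) ≠ 0 := Nat.cast_ne_zero.mpr (Nat.factorial_ne_zero _)
  have hsf : ((s.factorial : ℕ) : ℚ) ≠ 0 := Nat.cast_ne_zero.mpr (Nat.factorial_ne_zero _)
  have hsif : (((s-i).factorial : ℕ) : ℚ) ≠ 0 := Nat.cast_ne_zero.mpr (Nat.factorial_ne_zero _)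
  have h2sf : (((2*s+1).factorial : ℕ) : ℚ) ≠ 0 := Nat.cast_ne_zero.mpr (Nat.factorial_ne_zero _)
  set c : ℚ := ((2*s+1).factorial : ℚ) / ((i.factorial : ℚ) * s.factorial * (s-i).factorial)
    with hc
  have step1 : ∀ j ∈ range (s+1),
      (-1 : ℚ) ^ j * (((i + j).factorial : ℚ) / (i.factorial : ℚ)) *
          (((2 * s + 1).factorial : ℚ) / ((s + j + 1).factorial : ℚ)) *
          ((1 / (s.factorial : ℚ)) * (s.choose j) * ((s + j).choose j))
        = ∑ k ∈ range ((s-i)+1),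
            (c * ((-1:ℚ)^k * ((s-i).choose k))) *
              ((-1:ℚ)^j * (s.choose j) * ((s+j).choose j) / (((i+k : ℕ):ℚ) + j + 1)) := by
    intro j hj
    have hA := lemA (s-i) (i+j)
    rw [show (i+j)+(s-i)+1 = s+j+1 by omega] at hA
    have hjf : (((s+j+1).factorial : ℕ) : ℚ) ≠ 0 := Nat.cast_ne_zero.mpr (Nat.factorial_ne_zero _)
    have lhs_eq : (-1 : ℚ) ^ j * (((i + j).factorial : ℚ) / (i.factorial : ℚ)) *
          (((2 * s + 1).factorial : ℚ) / ((s + j + 1).factorial : ℚ)) *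
          ((1 / (s.factorial : ℚ)) * (s.choose j) * ((s + j).choose j))
        = ((-1:ℚ)^j * (s.choose j) * ((s+j).choose j) * c)
            * (((s-i).factorial * (i+j).factorial : ℚ) / ((s+j+1).factorial)) := by
      rw [hc]
      field_simp
    rw [lhs_eq, ← hA, Finset.mul_sum]
    apply Finset.sum_congr rfl
    intro k _
    have hden : ((i+j : ℕ):ℚ) + k + 1 = ((i+k : ℕ):ℚ) + j + 1 := by push_cast; ring
    rw [hden]
    ring
  rw [Finset.sum_congr rfl step1, Finset.sum_comm]
  have step2 : ∀ k ∈ range ((s-i)+1),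
      ∑ j ∈ range (s+1), (c * ((-1:ℚ)^k * ((s-i).choose k))) *
          ((-1:ℚ)^j * (s.choose j) * ((s+j).choose j) / (((i+k : ℕ):ℚ) + j + 1))
        = (c * ((-1:ℚ)^k * ((s-i).choose k))) *
            (if i+k = s then (-1:ℚ)^s * ((s.factorial : ℚ) * s.factorial) / ((2*s+1).factorial)
              else 0) := by
    intro k hk
    have hk' : k ≤ s - i := Nat.lt_succ_iff.mp (mem_range.mp hk)
    rw [← Finset.mul_sum, lemInner s (i+k) (by omega)]
  rw [Finset.sum_congr rfl step2]
  rw [Finset.sum_eq_single_of_mem (s-i) (mem_range.mpr (by omega))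
    (fun k _ hne => by rw [if_neg (by omega)]; ring)]
  rw [if_pos (by omega), Nat.choose_self, hc]
  have hpow : (-1:ℚ)^(s-i) * (-1:ℚ)^s = (-1:ℚ)^i := by
    rw [← pow_add, show (s-i)+s = 2*(s-i)+i by omega, pow_add, pow_mul]
    norm_num
  rw [Nat.cast_choose ℚ hi]
  field_simp
  linear_combination hpow
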